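/- Let 𝒮 : (bounded open subsets of ℝ^d) → [0,∞] be subadditive (𝒮(A) ≤ 𝒮(B) + 𝒮(C) whenever B, C ⊂ A are disjoint and |A \ (B ∪ C)| = 0), ℤ^d-invariant (𝒮(A + z) = 𝒮(A) for all z ∈ ℤ^d), and suppose there exists c > 0 with 𝒮(A) ≤ c|A| for all bounded open A. Then for every open cube Q ⊂ ℝ^d, the limit as ε → 0 of 𝒮((1/ε)Q)/|(1/ε)Q| exists and equals inf over integers k ≥ 1 of 𝒮(kY)/k^d, where Y = (0,1)^d. -/

import Mathlib

open MeasureTheory ENNReal Filter Pointwise Bornology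

/-- The open cube `(0,k)^d` in `ℝ^d`. -/
def cube (d : ℕ) (k : ℕ) : Set (EuclideanSpace ℝ (Fin d)) :=
  {x | ∀ i, x i ∈ Set.Ioo (0 : ℝ) (k : ℝ)}


variable {d : ℕ}

def abox (a : Fin d → ℝ) (t : ℝ) : Set (EuclideanSpace ℝ (Fin d)) :=
  {y | ∀ i, y i ∈ Set.Ioo (a i) (a i + t)}

lemma mem_abox {a : Fin d → ℝ} {t : ℝ} {y : EuclideanSpace ℝ (Fin d)} :
    y ∈ abox a t ↔ ∀ i, y i ∈ Set.Ioo (a i) (a i + t) := Iff.rfl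

lemma abox_eq_preimage (a : Fin d → ℝ) (t : ℝ) :
    abox a t = (MeasurableEquiv.toLp 2 (Fin d → ℝ)).symm ⁻¹'
      (Set.univ.pi fun i => Set.Ioo (a i) (a i + t)) := by
  ext y; simp only [abox, Set.mem_preimage, Set.mem_univ_pi, Set.mem_setOf_eq]
  rfl

lemma abox_eq_preimage' (a : Fin d → ℝ) (t : ℝ) :
    abox a t = (WithLp.equiv 2 (Fin d → ℝ)) ⁻¹'
      (Set.univ.pi fun i => Set.Ioo (a i) (a i + t)) := by
  ext y; simp only [abox, Set.mem_preimage, Set.mem_univ_pi, Set.mem_setOf_eq]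
  rfl

lemma isOpen_abox (a : Fin d → ℝ) (t : ℝ) : IsOpen (abox a t) := by
  rw [abox_eq_preimage']
  exact (isOpen_set_pi Set.finite_univ (fun i _ => isOpen_Ioo)).preimage
    (PiLp.continuous_ofLp 2 _)

lemma isBounded_abox (a : Fin d → ℝ) (t : ℝ) : IsBounded (abox a t) := by
  rw [abox_eq_preimage']
  exact (PiLp.antilipschitzWith_ofLp 2 (fun _ : Fin d => ℝ)).isBounded_preimage
    (IsBounded.pi fun i => Metric.isBounded_Ioo _ _)

lemma volume_abox (a : Fin d → ℝ) {t : ℝ} (ht : 0 ≤ t) :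
    volume (abox a t) = ENNReal.ofReal t ^ d := by
  rw [abox_eq_preimage,
    (EuclideanSpace.volume_preserving_symm_measurableEquiv_toLp (Fin d)).measure_preimage
      (MeasurableSet.univ_pi fun i => measurableSet_Ioo).nullMeasurableSet,
    volume_pi_pi]
  simp [Real.volume_Ioo]

lemma measurableSet_abox (a : Fin d → ℝ) (t : ℝ) : MeasurableSet (abox a t) :=
  (isOpen_abox a t).measurableSet

lemma closure_abox_subset (a : Fin d → ℝ) (t : ℝ) :
    closure (abox a t) ⊆ (WithLp.equiv 2 (Fin d → ℝ)) ⁻¹'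
      (Set.univ.pi fun i => Set.Icc (a i) (a i + t)) := by
  apply closure_minimal
  · rw [abox_eq_preimage']
    exact Set.preimage_mono (Set.pi_mono fun i _ => Set.Ioo_subset_Icc_self)
  · exact (isClosed_set_pi fun i _ => isClosed_Icc).preimage
      (PiLp.continuous_ofLp 2 _)

lemma volume_closure_diff_abox (a : Fin d → ℝ) {t : ℝ} (ht : 0 ≤ t) :
    volume (closure (abox a t) \ abox a t) = 0 := by
  have h1 : volume (closure (abox a t)) ≤ ENNReal.ofReal t ^ d := by
    refine le_trans (measure_mono (closure_abox_subset a t)) (le_of_eq ?_)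
    have : ((WithLp.equiv 2 (Fin d → ℝ)) ⁻¹'
        (Set.univ.pi fun i => Set.Icc (a i) (a i + t)) : Set (EuclideanSpace ℝ (Fin d)))
        = (MeasurableEquiv.toLp 2 (Fin d → ℝ)).symm ⁻¹'
        (Set.univ.pi fun i => Set.Icc (a i) (a i + t)) := rfl
    rw [this, (EuclideanSpace.volume_preserving_symm_measurableEquiv_toLp (Fin d)).measure_preimage
        (MeasurableSet.univ_pi fun i => measurableSet_Icc).nullMeasurableSet,
      volume_pi_pi]
    simp [Real.volume_Icc]
  have h2 := measure_diff (subset_closure (s := abox a t)) (measurableSet_abox a t).nullMeasurableSet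
    (by rw [volume_abox a ht]; exact (pow_lt_top ofReal_lt_top).ne)
  rw [h2, volume_abox a ht, tsub_eq_zero_of_le h1]




lemma image_abox (a : Fin d → ℝ) (t : ℝ) (z : Fin d → ℤ) :
    (fun x : EuclideanSpace ℝ (Fin d) =>
        x + (WithLp.equiv 2 (Fin d → ℝ)).symm fun i => (z i : ℝ)) '' abox a t
      = abox (fun i => a i + z i) t := by
  ext y
  constructor
  · rintro ⟨x, hx, rfl⟩
    intro i
    have hxi := hx i
    show x i + (z i : ℝ) ∈ Set.Ioo (a i + z i) (a i + z i + t)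
    simp only [Set.mem_Ioo] at hxi ⊢
    constructor <;> [linarith [hxi.1]; linarith [hxi.2]]
  · intro hy
    refine ⟨y - (WithLp.equiv 2 (Fin d → ℝ)).symm fun i => (z i : ℝ), fun i => ?_, by
      simp [sub_add_cancel]⟩
    show y i - (z i : ℝ) ∈ Set.Ioo (a i) (a i + t)
    have hyi := hy i
    simp only [Set.mem_Ioo] at hyi ⊢
    constructor <;> [linarith [hyi.1]; linarith [hyi.2]]


lemma list_subadd (S : Set (EuclideanSpace ℝ (Fin d)) → ℝ≥0∞) (c : ℝ≥0∞)
    (hsub : ∀ A B C : Set (EuclideanSpace ℝ (Fin d)),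
      IsOpen A → IsBounded A → IsOpen B → IsOpen C → B ⊆ A → C ⊆ A → Disjoint B C →
      volume (A \ (B ∪ C)) = 0 → S A ≤ S B + S C)
    (hdom : ∀ A : Set (EuclideanSpace ℝ (Fin d)), IsOpen A → IsBounded A →
      S A ≤ c * volume A) :
    ∀ (l : List (Set (EuclideanSpace ℝ (Fin d)))) (A : Set (EuclideanSpace ℝ (Fin d))),
    IsOpen A → IsBounded A →
    (∀ B ∈ l, IsOpen B ∧ B ⊆ A ∧ volume (closure B \ B) = 0) →
    l.Pairwise Disjoint →
    volume (A \ ⋃ B ∈ l, B) = 0 →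
    S A ≤ (l.map S).sum := by
  intro l
  induction l with
  | nil =>
    intro A hAo hAb _ _ hnull
    simp only [List.not_mem_nil, Set.iUnion_of_empty, Set.iUnion_empty, Set.diff_empty] at hnull
    calc S A ≤ c * volume A := hdom A hAo hAb
      _ = 0 := by rw [hnull, mul_zero]
      _ ≤ _ := zero_le
  | cons B tl ih =>
    intro A hAo hAb hmem hpw hnull
    obtain ⟨hBo, hBA, hBcl⟩ := hmem B List.mem_cons_self
    set C := A \ closure B with hC
    have hCo : IsOpen C := hAo.sdiff isClosed_closure
    have hCb : IsBounded C := hAb.subset Set.diff_subset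
    have hdisj : Disjoint B C := Set.disjoint_left.2 fun x hxB hxC => hxC.2 (subset_closure hxB)
    have hnull1 : volume (A \ (B ∪ C)) = 0 := by
      refine measure_mono_null (fun x hx => ?_) hBcl
      obtain ⟨hxA, hxBC⟩ := hx
      rw [Set.mem_union] at hxBC
      push_neg at hxBC
      refine ⟨?_, hxBC.1⟩
      by_contra hxcl
      exact hxBC.2 ⟨hxA, hxcl⟩
    have h1 : S A ≤ S B + S C :=
      hsub A B C hAo hAb hBo hCo hBA Set.diff_subset hdisj hnull1
    have htl : ∀ B' ∈ tl, IsOpen B' ∧ B' ⊆ C ∧ volume (closure B' \ B') = 0 := by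
      intro B' hB'
      obtain ⟨hB'o, hB'A, hB'cl⟩ := hmem B' (List.mem_cons_of_mem B hB')
      refine ⟨hB'o, fun x hx => ⟨hB'A hx, fun hxcl => ?_⟩, hB'cl⟩
      have hdisjBB' : Disjoint B B' := (List.pairwise_cons.1 hpw).1 B' hB'
      have : (B' ∩ B).Nonempty := by
        rw [mem_closure_iff] at hxcl
        obtain ⟨y, hy1, hy2⟩ := hxcl B' hB'o hx
        exact ⟨y, hy1, hy2⟩
      exact Set.not_nonempty_empty (by rwa [(hdisjBB'.symm).inter_eq] at this)
    have htlnull : volume (C \ ⋃ B' ∈ tl, B') = 0 := by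
      refine measure_mono_null (fun x hx => ?_) hnull
      obtain ⟨⟨hxA, hxcl⟩, hxU⟩ := hx
      refine ⟨hxA, fun hxU' => ?_⟩
      simp only [Set.mem_iUnion, exists_prop] at hxU'
      obtain ⟨B', hB', hxB'⟩ := hxU'
      rcases List.mem_cons.1 hB' with rfl | hB'tl
      · exact hxcl (subset_closure hxB')
      · exact hxU (Set.mem_biUnion hB'tl hxB')
    have h2 : S C ≤ (tl.map S).sum := ih C hCo hCb htl (List.pairwise_cons.1 hpw).2 htlnull
    calc S A ≤ S B + S C := h1
      _ ≤ S B + (tl.map S).sum := add_le_add_right h2 _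
      _ = ((B :: tl).map S).sum := by simp

set_option maxHeartbeats 2000000 in
lemma pack (S : Set (EuclideanSpace ℝ (Fin d)) → ℝ≥0∞) (c : ℝ≥0∞)
    (hsub : ∀ A B C : Set (EuclideanSpace ℝ (Fin d)),
      IsOpen A → IsBounded A → IsOpen B → IsOpen C → B ⊆ A → C ⊆ A → Disjoint B C →
      volume (A \ (B ∪ C)) = 0 → S A ≤ S B + S C)
    (hinv : ∀ (A : Set (EuclideanSpace ℝ (Fin d))) (z : Fin d → ℤ), IsOpen A → IsBounded A →
      S ((fun x => x + (WithLp.equiv 2 (Fin d → ℝ)).symm fun i => (z i : ℝ)) '' A) = S A)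
    (hdom : ∀ A : Set (EuclideanSpace ℝ (Fin d)), IsOpen A → IsBounded A →
      S A ≤ c * volume A)
    (A₀ b : Fin d → ℝ) (T t : ℝ) (ht : 0 < t) (hT : 0 ≤ T)
    (s n : ℕ) (hts : t ≤ s)
    (hlo : ∀ i, A₀ i ≤ b i)
    (hhi : ∀ i, b i + t + s * ((n : ℝ) - 1) ≤ A₀ i + T) :
    S (abox A₀ T) ≤ (n ^ d : ℕ) * S (abox b t)
      + c * (volume (abox A₀ T) - (n ^ d : ℕ) * ENNReal.ofReal t ^ d) := by
  classical
  set A := abox A₀ T with hA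
  have hAo := isOpen_abox A₀ T
  have hAb := isBounded_abox A₀ T
  -- the pieces
  set P : (Fin d → Fin n) → Set (EuclideanSpace ℝ (Fin d)) :=
    fun z => abox (fun i => b i + (s : ℝ) * ((z i : ℕ) : ℝ)) t with hP
  have hSP : ∀ z, S (P z) = S (abox b t) := by
    intro z
    have := hinv (abox b t) (fun i => (s : ℤ) * ((z i : ℕ) : ℤ))
      (isOpen_abox b t) (isBounded_abox b t)
    rw [image_abox] at this
    rw [← this]
    simp only [hP]
    congr 2
    funext i
    push_cast
    ring
  have hPsub : ∀ z, P z ⊆ A := by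
    intro z y hy i
    have hyi := hy i
    simp only [Set.mem_Ioo] at hyi ⊢
    have hz1 : (0 : ℝ) ≤ (s : ℝ) * ((z i : ℕ) : ℝ) := by positivity
    have hz2 : ((z i : ℕ) : ℝ) ≤ (n : ℝ) - 1 := by
      have := (z i).isLt
      have : ((z i : ℕ) : ℝ) ≤ (n : ℝ) - 1 := by
        have h1 : ((z i : ℕ) : ℝ) + 1 ≤ (n : ℝ) := by exact_mod_cast (z i).isLt
        linarith
      exact this
    constructor
    · have := hlo i; nlinarith [hyi.1]
    · have h2 := hhi i
      have h3 : (s : ℝ) * ((z i : ℕ) : ℝ) ≤ (s : ℝ) * ((n : ℝ) - 1) :=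
        mul_le_mul_of_nonneg_left hz2 (by positivity)
      nlinarith [hyi.2]
  have hPdisj : ∀ z z', z ≠ z' → Disjoint (P z) (P z') := by
    intro z z' hne
    have key : ∀ (w w' : Fin d → Fin n) (i : Fin d), ((w i : ℕ) : ℝ) < ((w' i : ℕ) : ℝ) →
        Disjoint (P w) (P w') := by
      intro w w' i hlt
      rw [Set.disjoint_left]
      intro x hxw hxw'
      have hs1 : ((w i : ℕ) : ℝ) + 1 ≤ ((w' i : ℕ) : ℝ) := by
        exact_mod_cast Nat.succ_le_of_lt (by exact_mod_cast hlt)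
      have hts' : (0:ℝ) < s := lt_of_lt_of_le ht hts
      have hmul : (s:ℝ) * (((w i : ℕ) : ℝ) + 1) ≤ (s:ℝ) * ((w' i : ℕ) : ℝ) :=
        mul_le_mul_of_nonneg_left hs1 hts'.le
      have h1' : x i ∈ Set.Ioo (b i + (s:ℝ) * ((w i : ℕ) : ℝ))
          (b i + (s:ℝ) * ((w i : ℕ) : ℝ) + t) := hxw i
      have h2' : x i ∈ Set.Ioo (b i + (s:ℝ) * ((w' i : ℕ) : ℝ))
          (b i + (s:ℝ) * ((w' i : ℕ) : ℝ) + t) := hxw' i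
      simp only [Set.mem_Ioo] at h1' h2'
      linarith [h1'.2, h2'.1]
    have : ∃ i, z i ≠ z' i := by
      by_contra h
      push_neg at h
      exact hne (funext h)
    obtain ⟨i, hi⟩ := this
    rcases lt_or_gt_of_ne hi with h | h
    · exact key z z' i (by exact_mod_cast h)
    · exact (key z' z i (by exact_mod_cast h)).symm
  -- the remainder set
  set D : Set (EuclideanSpace ℝ (Fin d)) := A \ ⋃ z, closure (P z) with hD
  have hDo : IsOpen D := hAo.sdiff (isClosed_iUnion_of_finite fun z => isClosed_closure)
  have hDsub : D ⊆ A := Set.diff_subset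
  have hDb : IsBounded D := hAb.subset hDsub
  have hDcl : volume (closure D \ D) = 0 := by
    have hsub' : closure D \ D ⊆ (closure A \ A) ∪ ⋃ z, (closure (P z) \ P z) := by
      intro x ⟨hxcl, hxD⟩
      by_cases hxA : x ∈ A
      · right
        have hxU : x ∈ ⋃ z, closure (P z) := by
          by_contra h
          exact hxD ⟨hxA, h⟩
        simp only [Set.mem_iUnion] at hxU ⊢
        obtain ⟨z, hz⟩ := hxU
        refine ⟨z, hz, fun hxP => ?_⟩
        have : (P z ∩ D).Nonempty := by
          rw [mem_closure_iff] at hxcl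
          obtain ⟨y, hy1, hy2⟩ := hxcl (P z) (isOpen_abox _ _) hxP
          exact ⟨y, hy1, hy2⟩
        obtain ⟨y, hy1, hy2⟩ := this
        exact hy2.2 (Set.mem_iUnion.2 ⟨z, subset_closure hy1⟩)
      · left
        exact ⟨closure_mono hDsub hxcl, hxA⟩
    refine measure_mono_null hsub' (measure_union_null ?_ (measure_iUnion_null fun z => ?_))
    · exact volume_closure_diff_abox A₀ hT
    · exact volume_closure_diff_abox _ ht.le
  -- assemble the list of pieces
  set l : List (Set (EuclideanSpace ℝ (Fin d))) :=
    ((Finset.univ : Finset (Fin d → Fin n)).toList.map P) ++ [D] with hl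
  have hDl : D ∈ l := List.mem_append.2 (Or.inr (List.mem_singleton.2 rfl))
  have hmem : ∀ B ∈ l, IsOpen B ∧ B ⊆ A ∧ volume (closure B \ B) = 0 := by
    intro B hB
    rcases List.mem_append.1 hB with h | h
    · obtain ⟨z, _, rfl⟩ := List.mem_map.1 h
      exact ⟨isOpen_abox _ _, hPsub z, volume_closure_diff_abox _ ht.le⟩
    · rw [List.mem_singleton] at h; subst h
      exact ⟨hDo, hDsub, hDcl⟩
  have hPD : ∀ z, Disjoint (P z) D :=
    fun z => Set.disjoint_left.2 fun a haP haD =>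
      haD.2 (Set.mem_iUnion.2 ⟨z, subset_closure haP⟩)
  have hpw : l.Pairwise Disjoint := by
    rw [List.pairwise_append]
    refine ⟨?_, List.pairwise_singleton _ _, ?_⟩
    · rw [List.pairwise_map]
      exact List.Pairwise.imp (fun {a b} h => hPdisj a b h) (Finset.nodup_toList _)
    · intro x hx y hy
      rw [List.mem_singleton] at hy; subst hy
      obtain ⟨z, _, rfl⟩ := List.mem_map.1 hx
      exact hPD z
  have hPzcl : volume (⋃ z, (closure (P z) \ P z)) = 0 :=
    measure_iUnion_null fun z => volume_closure_diff_abox _ ht.le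
  have hcov : volume (A \ ⋃ B ∈ l, B) = 0 := by
    refine measure_mono_null (fun x hx => ?_) hPzcl
    obtain ⟨hxA, hxU⟩ := hx
    have hxD : x ∉ D := fun h => hxU (Set.mem_biUnion hDl h)
    have hxcl : x ∈ ⋃ z, closure (P z) := by
      by_contra h
      exact hxD ⟨hxA, h⟩
    simp only [Set.mem_iUnion] at hxcl ⊢
    obtain ⟨z, hz⟩ := hxcl
    refine ⟨z, hz, fun hxP => ?_⟩
    exact hxU (Set.mem_biUnion
      (List.mem_append.2 (Or.inl (List.mem_map.2 ⟨z, Finset.mem_toList.2 (Finset.mem_univ z), rfl⟩)))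
      hxP)
  have hlist := list_subadd S c hsub hdom l A hAo hAb hmem hpw hcov
  have hsum : (l.map S).sum = (n ^ d : ℕ) * S (abox b t) + S D := by
    rw [hl, List.map_append, List.sum_append, List.map_map]
    simp only [List.map_cons, List.map_nil, List.sum_cons, List.sum_nil, add_zero]
    congr 1
    rw [Finset.sum_map_toList Finset.univ (S ∘ P)]
    have : ∀ z ∈ (Finset.univ : Finset (Fin d → Fin n)), (S ∘ P) z = S (abox b t) :=
      fun z _ => hSP z
    rw [Finset.sum_congr rfl this, Finset.sum_const, Finset.card_univ]
    have hcard : Fintype.card (Fin d → Fin n) = n ^ d := by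
      rw [Fintype.card_fun, Fintype.card_fin, Fintype.card_fin]
    rw [hcard, nsmul_eq_mul]
  -- volume accounting
  have hvolU : volume (⋃ z, P z) = (n ^ d : ℕ) * ENNReal.ofReal t ^ d := by
    rw [measure_iUnion (fun z z' h => hPdisj z z' h) (fun z => measurableSet_abox _ _),
      tsum_fintype]
    have : ∀ z : Fin d → Fin n, volume (P z) = ENNReal.ofReal t ^ d :=
      fun z => volume_abox _ ht.le
    rw [Finset.sum_congr rfl (fun z _ => this z), Finset.sum_const, Finset.card_univ]
    have hcard : Fintype.card (Fin d → Fin n) = n ^ d := by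
      rw [Fintype.card_fun, Fintype.card_fin, Fintype.card_fin]
    rw [hcard, nsmul_eq_mul]
  have hUA : (⋃ z, P z) ⊆ A := Set.iUnion_subset hPsub
  have hvolD : volume D ≤ volume A - (n ^ d : ℕ) * ENNReal.ofReal t ^ d := by
    have hDsub' : D ⊆ A \ ⋃ z, P z := fun x hx =>
      ⟨hx.1, fun hxU => hx.2 (Set.mem_iUnion.2
        ((Set.mem_iUnion.1 hxU).imp fun z hz => subset_closure hz))⟩
    refine le_trans (measure_mono hDsub') (le_of_eq ?_)
    rw [measure_diff hUA (MeasurableSet.iUnion fun z => measurableSet_abox _ _).nullMeasurableSet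
      (by rw [hvolU]; exact (ENNReal.mul_lt_top (by exact_mod_cast ENNReal.natCast_lt_top (n^d)) (pow_lt_top ofReal_lt_top)).ne),
      hvolU]
  calc S A ≤ (l.map S).sum := hlist
    _ = (n ^ d : ℕ) * S (abox b t) + S D := hsum
    _ ≤ (n ^ d : ℕ) * S (abox b t) + c * volume D := add_le_add_right (hdom D hDo hDb) _
    _ ≤ (n ^ d : ℕ) * S (abox b t)
        + c * (volume A - (n ^ d : ℕ) * ENNReal.ofReal t ^ d) :=
      add_le_add_right (mul_le_mul_right hvolD c) _

lemma one_sub_pow_le {x : ℝ} (h0 : 0 ≤ x) (h1 : x ≤ 1) (m : ℕ) :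
    1 - x ^ m ≤ m * (1 - x) := by
  induction m with
  | zero => simp
  | succ m ih =>
    have hxm : x ^ m ≤ 1 := pow_le_one₀ h0 h1
    have : 1 - x ^ (m + 1) = (1 - x ^ m) + x ^ m * (1 - x) := by ring
    rw [this]
    push_cast
    nlinarith

lemma frac_pow_bound {t u e : ℝ} (ht : 0 < t) (hu : 0 ≤ u) (hut : u ≤ t)
    (he : t - u ≤ e) (m : ℕ) :
    (t ^ m - u ^ m) / t ^ m ≤ m * e / t := by
  have hx0 : 0 ≤ u / t := by positivity
  have hx1 : u / t ≤ 1 := by rw [div_le_one ht]; exact hut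
  have key := one_sub_pow_le hx0 hx1 m
  have htm : (0:ℝ) < t ^ m := by positivity
  have h1 : (t ^ m - u ^ m) / t ^ m = 1 - (u / t) ^ m := by
    rw [div_pow, sub_div, div_self htm.ne']
  rw [h1]
  calc 1 - (u/t)^m ≤ m * (1 - u/t) := key
    _ = m * (t - u) / t := by field_simp
    _ ≤ m * e / t := by
        gcongr

lemma cube_eq (d k : ℕ) : cube d k = abox (fun _ => (0:ℝ)) (k : ℝ) := by
  ext y; simp [cube, abox]

set_option maxHeartbeats 1000000 in
lemma UB {d : ℕ} (S : Set (EuclideanSpace ℝ (Fin d)) → ℝ≥0∞) (c : ℝ≥0∞)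
    (hsub : ∀ A B C : Set (EuclideanSpace ℝ (Fin d)),
      IsOpen A → IsBounded A → IsOpen B → IsOpen C → B ⊆ A → C ⊆ A → Disjoint B C →
      volume (A \ (B ∪ C)) = 0 → S A ≤ S B + S C)
    (hinv : ∀ (A : Set (EuclideanSpace ℝ (Fin d))) (z : Fin d → ℤ), IsOpen A → IsBounded A →
      S ((fun x => x + (WithLp.equiv 2 (Fin d → ℝ)).symm fun i => (z i : ℝ)) '' A) = S A)
    (hdom : ∀ A : Set (EuclideanSpace ℝ (Fin d)), IsOpen A → IsBounded A →
      S A ≤ c * volume A)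
    (k : ℕ) (hk : 1 ≤ k) (a : Fin d → ℝ) (t : ℝ) (ht : (k : ℝ) + 2 ≤ t) :
    S (abox a t) / ENNReal.ofReal t ^ d
      ≤ S (cube d k) / (k : ℝ≥0∞) ^ d + c * ENNReal.ofReal (d * ((k:ℝ) + 1) / t) := by
  have hk0 : (0:ℝ) < k := by exact_mod_cast hk
  have ht0 : (0:ℝ) < t := by linarith
  set n : ℕ := ⌊(t - 1) / k⌋₊ with hn
  have hdiv_nonneg : (0:ℝ) ≤ (t-1)/k := div_nonneg (by linarith) hk0.le
  have hn1 : 1 ≤ n := by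
    apply Nat.le_floor
    rw [Nat.cast_one, le_div_iff₀ hk0]
    linarith
  have hn0 : (0:ℝ) ≤ n := Nat.cast_nonneg n
  have hnk_le : (k:ℝ) * n ≤ t - 1 := by
    have := Nat.floor_le hdiv_nonneg
    rw [← hn] at this
    calc (k:ℝ) * n ≤ k * ((t-1)/k) := by
          exact mul_le_mul_of_nonneg_left this hk0.le
      _ = t - 1 := by field_simp
  have hnk_ge : t - 1 - k ≤ (k:ℝ) * n := by
    have := Nat.lt_floor_add_one ((t-1)/k)
    rw [← hn] at this
    have h2 : (t-1)/k - 1 < (n:ℝ) := by linarith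
    have h4 : (k:ℝ) * ((t-1)/k - 1) < k * n := mul_lt_mul_of_pos_left h2 hk0
    have h5 : (k:ℝ) * ((t-1)/k - 1) = t - 1 - k := by field_simp
    linarith
  set b : Fin d → ℝ := fun i => ((⌈a i⌉ : ℤ) : ℝ) with hb
  have hpack := pack S c hsub hinv hdom a b t (k:ℝ) hk0 ht0.le k n (le_refl _)
    (fun i => Int.le_ceil (a i))
    (by
      intro i
      have h1 : (b i : ℝ) < a i + 1 := Int.ceil_lt_add_one (a i)
      have h2 : (k:ℝ) + (k:ℝ) * ((n:ℝ) - 1) = (k:ℝ) * n := by ring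
      linarith [hnk_le])
  have hScube : S (abox b (k:ℝ)) = S (cube d k) := by
    rw [cube_eq]
    have := hinv (abox (fun _ => (0:ℝ)) (k:ℝ)) (fun i => ⌈a i⌉)
      (isOpen_abox _ _) (isBounded_abox _ _)
    rw [image_abox] at this
    rw [← this]
    congr 1
    funext i
    simp [hb]
  rw [hScube, volume_abox a ht0.le] at hpack
  -- now divide by V := ofReal t ^ d
  set V : ℝ≥0∞ := ENNReal.ofReal t ^ d with hV
  have hdivided : S (abox a t) / V ≤
      ((n ^ d : ℕ) * S (cube d k)) / V
        + (c * (V - (n ^ d : ℕ) * ENNReal.ofReal (k:ℝ) ^ d)) / V :=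
    le_trans (ENNReal.div_le_div hpack (le_refl V)) (le_of_eq ENNReal.add_div)
  have hterm1 : ((n ^ d : ℕ) * S (cube d k)) / V ≤ S (cube d k) / (k : ℝ≥0∞) ^ d := by
    have hVge : ((n : ℝ≥0∞) ^ d) * ((k : ℝ≥0∞) ^ d) ≤ V := by
      have h1 : ((n : ℝ≥0∞) * (k : ℝ≥0∞)) ^ d ≤ ENNReal.ofReal t ^ d := by
        apply pow_le_pow_left₀
        · exact zero_le
        · rw [← ENNReal.ofReal_natCast n, ← ENNReal.ofReal_natCast k,
            ← ENNReal.ofReal_mul (Nat.cast_nonneg n)]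
          exact ENNReal.ofReal_le_ofReal (by nlinarith [hnk_le])
      calc ((n : ℝ≥0∞) ^ d) * ((k : ℝ≥0∞) ^ d) = ((n : ℝ≥0∞) * (k : ℝ≥0∞)) ^ d := by
            rw [mul_pow]
        _ ≤ V := h1
    calc ((n ^ d : ℕ) : ℝ≥0∞) * S (cube d k) / V
        ≤ ((n ^ d : ℕ) : ℝ≥0∞) * S (cube d k) / (((n:ℝ≥0∞)) ^ d * ((k:ℝ≥0∞)) ^ d) :=
          ENNReal.div_le_div (le_refl _) hVge
      _ = S (cube d k) / ((k:ℝ≥0∞)) ^ d := by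
          rw [show ((n ^ d : ℕ) : ℝ≥0∞) = (n : ℝ≥0∞) ^ d by push_cast; ring]
          exact ENNReal.mul_div_mul_left _ _ (by positivity)
            (by exact (pow_lt_top (ENNReal.natCast_lt_top n)).ne)
  have hterm2 : (c * (V - (n ^ d : ℕ) * ENNReal.ofReal (k:ℝ) ^ d)) / V
      ≤ c * ENNReal.ofReal (d * ((k:ℝ) + 1) / t) := by
    have hkn_pos : (0:ℝ) ≤ (k:ℝ) * n := by positivity
    have hrw : V - ((n ^ d : ℕ) : ℝ≥0∞) * ENNReal.ofReal (k:ℝ) ^ d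
        = ENNReal.ofReal (t ^ d - ((k:ℝ) * n) ^ d) := by
      rw [hV, ← ENNReal.ofReal_pow ht0.le,
        show ((n ^ d : ℕ) : ℝ≥0∞) = (ENNReal.ofReal (n:ℝ)) ^ d by
          rw [ENNReal.ofReal_natCast]; push_cast; ring,
        ← mul_pow, ← ENNReal.ofReal_mul (Nat.cast_nonneg n),
        ← ENNReal.ofReal_pow (by positivity : (0:ℝ) ≤ (n:ℝ) * k),
        ← ENNReal.ofReal_sub _ (by positivity)]
      ring_nf
    rw [hrw, mul_div_assoc]
    apply mul_le_mul_right
    rw [hV, ← ENNReal.ofReal_pow ht0.le,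
      ← ENNReal.ofReal_div_of_pos (show (0:ℝ) < t ^ d by positivity)]
    apply ENNReal.ofReal_le_ofReal
    exact frac_pow_bound ht0 hkn_pos (by nlinarith [hnk_le]) (by linarith [hnk_ge]) d
  calc S (abox a t) / V
      ≤ ((n ^ d : ℕ) * S (cube d k)) / V
        + (c * (V - (n ^ d : ℕ) * ENNReal.ofReal (k:ℝ) ^ d)) / V := hdivided
    _ ≤ S (cube d k) / (k : ℝ≥0∞) ^ d + c * ENNReal.ofReal (d * ((k:ℝ) + 1) / t) :=
        add_le_add hterm1 hterm2

set_option maxHeartbeats 1000000 in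
lemma LB {d : ℕ} (S : Set (EuclideanSpace ℝ (Fin d)) → ℝ≥0∞) (c : ℝ≥0∞)
    (hsub : ∀ A B C : Set (EuclideanSpace ℝ (Fin d)),
      IsOpen A → IsBounded A → IsOpen B → IsOpen C → B ⊆ A → C ⊆ A → Disjoint B C →
      volume (A \ (B ∪ C)) = 0 → S A ≤ S B + S C)
    (hinv : ∀ (A : Set (EuclideanSpace ℝ (Fin d))) (z : Fin d → ℤ), IsOpen A → IsBounded A →
      S ((fun x => x + (WithLp.equiv 2 (Fin d → ℝ)).symm fun i => (z i : ℝ)) '' A) = S A)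
    (hdom : ∀ A : Set (EuclideanSpace ℝ (Fin d)), IsOpen A → IsBounded A →
      S A ≤ c * volume A)
    (a : Fin d → ℝ) (t : ℝ) (ht : 0 < t) :
    S (cube d (⌈t⌉₊ + 1)) / (((⌈t⌉₊ + 1 : ℕ) : ℝ≥0∞)) ^ d
      ≤ S (abox a t) / ENNReal.ofReal t ^ d + c * ENNReal.ofReal (d * 2 / t) := by
  set s : ℕ := ⌈t⌉₊ + 1 with hs
  have hts : t ≤ (s:ℝ) := by
    have := Nat.le_ceil t
    push_cast [hs]
    linarith
  have hst : (s:ℝ) ≤ t + 2 := by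
    have := Nat.ceil_lt_add_one ht.le
    push_cast [hs]
    linarith
  have hs0 : (0:ℝ) < s := lt_of_lt_of_le ht hts
  set a' : Fin d → ℝ := fun i => Int.fract (a i) with ha'
  have hpack := pack S c hsub hinv hdom (fun _ => (0:ℝ)) a' (s:ℝ) t ht hs0.le s 1 hts
    (fun i => Int.fract_nonneg (a i))
    (by
      intro i
      have h1 : Int.fract (a i) < 1 := Int.fract_lt_one (a i)
      have h2 : ((1:ℕ):ℝ) - 1 = 0 := by norm_num
      simp only [ha', h2, mul_zero, add_zero, zero_add]
      have h3 : t + 1 ≤ (s:ℝ) := by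
        have := Nat.le_ceil t
        push_cast [hs]
        linarith
      linarith)
  have hSa : S (abox a' t) = S (abox a t) := by
    have := hinv (abox a t) (fun i => -⌊a i⌋) (isOpen_abox _ _) (isBounded_abox _ _)
    rw [image_abox] at this
    have hfun : (fun i => a i + ((-⌊a i⌋ : ℤ) : ℝ)) = a' := by
      funext i
      simp only [ha', ← Int.self_sub_floor]
      push_cast
      ring
    rw [hfun] at this
    exact this
  simp only [Nat.one_pow, Nat.cast_one, one_mul] at hpack
  rw [hSa, volume_abox _ hs0.le] at hpack
  -- divide by W = (s:ℝ≥0∞)^d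
  have hWeq : ((s:ℝ≥0∞)) ^ d = ENNReal.ofReal (s:ℝ) ^ d := by
    rw [ENNReal.ofReal_natCast]
  have hdivided : S (abox (fun _ => (0:ℝ)) (s:ℝ)) / ENNReal.ofReal (s:ℝ) ^ d ≤
      S (abox a t) / ENNReal.ofReal (s:ℝ) ^ d
        + (c * (ENNReal.ofReal (s:ℝ) ^ d - ENNReal.ofReal t ^ d)) / ENNReal.ofReal (s:ℝ) ^ d :=
    le_trans (ENNReal.div_le_div hpack (le_refl _)) (le_of_eq ENNReal.add_div)
  have hterm1 : S (abox a t) / ENNReal.ofReal (s:ℝ) ^ d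
      ≤ S (abox a t) / ENNReal.ofReal t ^ d :=
    ENNReal.div_le_div (le_refl _)
      (pow_le_pow_left₀ zero_le (ENNReal.ofReal_le_ofReal hts) d)
  have hterm2 : (c * (ENNReal.ofReal (s:ℝ) ^ d - ENNReal.ofReal t ^ d))
        / ENNReal.ofReal (s:ℝ) ^ d
      ≤ c * ENNReal.ofReal (d * 2 / t) := by
    rw [mul_div_assoc]
    apply mul_le_mul_right
    rw [← ENNReal.ofReal_pow hs0.le, ← ENNReal.ofReal_pow ht.le,
      ← ENNReal.ofReal_sub _ (by positivity),
      ← ENNReal.ofReal_div_of_pos (show (0:ℝ) < (s:ℝ) ^ d by positivity)]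
    apply ENNReal.ofReal_le_ofReal
    calc ((s:ℝ) ^ d - t ^ d) / (s:ℝ) ^ d ≤ d * 2 / s :=
        frac_pow_bound hs0 ht.le hts (by linarith) d
      _ ≤ d * 2 / t := by
          apply div_le_div_of_nonneg_left (by positivity) ht hts
  calc S (cube d s) / ((s:ℝ≥0∞)) ^ d
      = S (abox (fun _ => (0:ℝ)) (s:ℝ)) / ENNReal.ofReal (s:ℝ) ^ d := by
        rw [cube_eq, hWeq]
    _ ≤ _ := le_trans hdivided (add_le_add hterm1 hterm2)


set_option maxHeartbeats 1000000 in
/-- Akcoglu–Krengel: a subadditive, `ℤ^d`-invariant set function `𝒮`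
on bounded open sets dominated by `c·|A|` satisfies
`𝒮((1/ε)Q)/|(1/ε)Q| → inf_{k≥1} 𝒮(kY)/k^d` as `ε → 0⁺`, for every open cube `Q`. -/
theorem akcoglu_krengel {d : ℕ}
    (S : Set (EuclideanSpace ℝ (Fin d)) → ℝ≥0∞)
    (hsub : ∀ A B C : Set (EuclideanSpace ℝ (Fin d)),
      IsOpen A → IsBounded A → IsOpen B → IsOpen C → B ⊆ A → C ⊆ A → Disjoint B C →
      volume (A \ (B ∪ C)) = 0 → S A ≤ S B + S C)
    (hinv : ∀ (A : Set (EuclideanSpace ℝ (Fin d))) (z : Fin d → ℤ), IsOpen A → IsBounded A →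
      S ((fun x => x + (WithLp.equiv 2 (Fin d → ℝ)).symm fun i => (z i : ℝ)) '' A) = S A)
    (c : ℝ≥0∞) (hc : 0 < c) (hc' : c ≠ ⊤)
    (hdom : ∀ A : Set (EuclideanSpace ℝ (Fin d)), IsOpen A → IsBounded A →
      S A ≤ c * volume A) :
    ∀ Q : Set (EuclideanSpace ℝ (Fin d)),
      (∃ (x₀ : EuclideanSpace ℝ (Fin d)) (r : ℝ), 0 < r ∧
        Q = {y | ∀ i, y i ∈ Set.Ioo (x₀ i) (x₀ i + r)}) →
      Tendsto (fun ε : ℝ => S ((1/ε) • Q) / volume ((1/ε) • Q))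
        (nhdsWithin 0 (Set.Ioi 0))
        (nhds (⨅ k : ℕ, ⨅ _ : 1 ≤ k, S (cube d k) / (k : ℝ≥0∞) ^ d)) := by
  rintro Q ⟨x₀, r, hr, hQ⟩
  set L := ⨅ k : ℕ, ⨅ _ : 1 ≤ k, S (cube d k) / (k : ℝ≥0∞) ^ d with hL
  have hLle : ∀ k : ℕ, 1 ≤ k → L ≤ S (cube d k) / (k : ℝ≥0∞) ^ d := fun k hk =>
    iInf_le_of_le k (iInf_le _ hk)
  have hL1 : L ≤ c := by
    calc L ≤ S (cube d 1) / (1 : ℝ≥0∞) ^ d := by exact_mod_cast hLle 1 le_rfl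
      _ = S (cube d 1) := by simp
      _ ≤ c * volume (cube d 1) := by
          rw [cube_eq]
          exact hdom _ (isOpen_abox _ _) (isBounded_abox _ _)
      _ = c := by
          rw [cube_eq, volume_abox _ (by norm_num : (0:ℝ) ≤ ((1:ℕ):ℝ))]
          norm_num
  have hLtop : L ≠ ⊤ := (lt_of_le_of_lt hL1 hc'.lt_top).ne
  -- description of the blown-up cube
  have hsmul : ∀ ε : ℝ, 0 < ε →
      (1/ε) • Q = abox (fun i => x₀ i / ε) (r / ε) := by
    intro ε hε
    rw [hQ]
    ext y
    rw [Set.mem_smul_set_iff_inv_smul_mem₀ (by positivity : (1/ε) ≠ 0)]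
    simp only [one_div, inv_inv]
    constructor
    · intro h i
      have hi := h i
      have hyi : (ε • y) i = ε * y i := rfl
      rw [hyi] at hi
      simp only [Set.mem_Ioo] at hi ⊢
      constructor
      · rw [div_lt_iff₀ hε]; linarith [hi.1]
      · rw [← add_div, lt_div_iff₀ hε]; linarith [hi.2]
    · intro h i
      have hi := h i
      simp only [Set.mem_Ioo] at hi
      have hyi : (ε • y) i = ε * y i := rfl
      show (ε • y) i ∈ Set.Ioo (x₀ i) (x₀ i + r)
      rw [hyi]
      simp only [Set.mem_Ioo]
      rw [div_lt_iff₀ hε] at hi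
      constructor
      · linarith [hi.1]
      · have := hi.2
        rw [← add_div, lt_div_iff₀ hε] at this
        linarith
  rw [ENNReal.tendsto_nhds hLtop]
  intro δ hδ
  set δ' := min δ 1 with hδ'
  have hδ'0 : 0 < δ' := lt_min hδ one_pos
  have hδ'top : δ' ≠ ⊤ := (lt_of_le_of_lt (min_le_right _ _) one_lt_top).ne
  have hδ'δ : δ' ≤ δ := min_le_left _ _
  set δr := δ'.toReal with hδr
  have hδr0 : 0 < δr := ENNReal.toReal_pos hδ'0.ne' hδ'top
  have hofδr : ENNReal.ofReal δr = δ' := ENNReal.ofReal_toReal hδ'top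
  have hhalf : ENNReal.ofReal (δr / 2) = δ' / 2 := by
    rw [ENNReal.ofReal_div_of_pos (by norm_num), hofδr]
    norm_num
  -- choose k with S(cube k)/k^d < L + δ'/2
  have hδ'20 : (0:ℝ≥0∞) < δ' / 2 := ENNReal.div_pos hδ'0.ne' ENNReal.ofNat_ne_top
  have hlt : L < L + δ' / 2 := ENNReal.lt_add_right hLtop hδ'20.ne'
  have hlt2 : ⨅ k : ℕ, ⨅ _ : 1 ≤ k, S (cube d k) / (k : ℝ≥0∞) ^ d < L + δ' / 2 := by
    rw [← hL]; exact hlt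
  obtain ⟨k, hk⟩ := iInf_lt_iff.1 hlt2
  have hk1 : 1 ≤ k := by
    by_contra h
    rw [iInf_neg h] at hk
    exact absurd hk (not_lt.2 le_top)
  rw [iInf_pos hk1] at hk
  -- helper for error terms
  set creal := c.toReal with hcreal
  have hcreal0 : 0 ≤ creal := ENNReal.toReal_nonneg
  have herr : ∀ u : ℝ, 0 ≤ u → creal * u ≤ δr / 2 →
      c * ENNReal.ofReal u ≤ δ' / 2 := by
    intro u hu hle
    calc c * ENNReal.ofReal u = ENNReal.ofReal (creal * u) := by
          rw [ENNReal.ofReal_mul hcreal0, hcreal, ENNReal.ofReal_toReal hc']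
      _ ≤ ENNReal.ofReal (δr / 2) := ENNReal.ofReal_le_ofReal hle
      _ = δ' / 2 := hhalf
  -- the threshold
  set T : ℝ := max ((k:ℝ) + 2)
    (1 + (2 * (creal * ((d:ℝ) * ((k:ℝ) + 1))) + 2 * (creal * ((d:ℝ) * 2))) / δr) with hT
  have hT1 : 1 ≤ T := by
    refine le_trans ?_ (le_max_right _ _)
    have : 0 ≤ (2 * (creal * ((d:ℝ) * ((k:ℝ) + 1))) + 2 * (creal * ((d:ℝ) * 2))) / δr := by
      positivity
    linarith
  have hT0 : 0 < T := lt_of_lt_of_le one_pos hT1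
  have hQT : 0 < r / T := by positivity
  filter_upwards [Ioc_mem_nhdsGT_of_mem (Set.mem_Ico.2 ⟨le_refl (0:ℝ), hQT⟩)] with ε hε
  obtain ⟨hε0, hεT⟩ := hε
  set t : ℝ := r / ε with htdef
  have ht0 : 0 < t := by positivity
  have htT : T ≤ t := by
    rw [htdef, le_div_iff₀ hε0]
    calc T * ε ≤ T * (r / T) := by
          exact mul_le_mul_of_nonneg_left hεT hT0.le
      _ = r := by field_simp
  have htk : (k:ℝ) + 2 ≤ t := le_trans (le_max_left _ _) htT
  have ht1 : (1:ℝ) ≤ t := le_trans hT1 htT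
  -- error bounds
  have herr1 : c * ENNReal.ofReal ((d:ℝ) * ((k:ℝ) + 1) / t) ≤ δ' / 2 := by
    apply herr _ (by positivity)
    calc creal * ((d:ℝ) * ((k:ℝ) + 1) / t) = creal * ((d:ℝ) * ((k:ℝ) + 1)) / t := by
          ring
      _ ≤ δr / 2 := by
          rw [div_le_iff₀ ht0]
          have h2 : 1 + 2 * (creal * ((d:ℝ) * ((k:ℝ) + 1))) / δr ≤ t := by
            refine le_trans ?_ (le_trans (le_max_right _ _) htT)
            have h3 : 0 ≤ 2 * (creal * ((d:ℝ) * 2)) / δr := by positivity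
            rw [add_div]
            linarith
          have hmul := mul_le_mul_of_nonneg_left h2 (by positivity : (0:ℝ) ≤ δr / 2)
          have h5 : δr / 2 * (1 + 2 * (creal * ((d:ℝ) * ((k:ℝ) + 1))) / δr)
              = δr / 2 + creal * ((d:ℝ) * ((k:ℝ) + 1)) := by
            field_simp
          linarith
  have herr2 : c * ENNReal.ofReal ((d:ℝ) * 2 / t) ≤ δ' / 2 := by
    apply herr _ (by positivity)
    calc creal * ((d:ℝ) * 2 / t) = creal * ((d:ℝ) * 2) / t := by ring
      _ ≤ δr / 2 := by
          rw [div_le_iff₀ ht0]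
          have h2 : 1 + 2 * (creal * ((d:ℝ) * 2)) / δr ≤ t := by
            refine le_trans ?_ (le_trans (le_max_right _ _) htT)
            have h3 : 0 ≤ 2 * (creal * ((d:ℝ) * ((k:ℝ) + 1))) / δr := by positivity
            rw [add_div]
            linarith
          have hmul := mul_le_mul_of_nonneg_left h2 (by positivity : (0:ℝ) ≤ δr / 2)
          have h5 : δr / 2 * (1 + 2 * (creal * ((d:ℝ) * 2)) / δr)
              = δr / 2 + creal * ((d:ℝ) * 2) := by
            field_simp
          linarith
  -- rewrite f ε
  have hfeq : S ((1/ε) • Q) / volume ((1/ε) • Q)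
      = S (abox (fun i => x₀ i / ε) t) / ENNReal.ofReal t ^ d := by
    rw [hsmul ε hε0, volume_abox _ ht0.le]
  rw [hfeq]
  constructor
  · -- lower bound : L - δ ≤ f
    have hlow := LB S c hsub hinv hdom (fun i => x₀ i / ε) t ht0
    have hLs := hLle (⌈t⌉₊ + 1) (by omega)
    have : L ≤ S (abox (fun i => x₀ i / ε) t) / ENNReal.ofReal t ^ d + δ' / 2 :=
      le_trans hLs (le_trans hlow (add_le_add_right herr2 _))
    have h2 : L - δ ≤ L - δ' := tsub_le_tsub_left hδ'δ L
    refine le_trans h2 (tsub_le_iff_right.2 (le_trans this (add_le_add_right ?_ _)))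
    exact le_trans (ENNReal.half_le_self) (le_refl _)
  · -- upper bound : f ≤ L + δ
    have hup := UB S c hsub hinv hdom k hk1 (fun i => x₀ i / ε) t htk
    calc S (abox (fun i => x₀ i / ε) t) / ENNReal.ofReal t ^ d
        ≤ S (cube d k) / (k : ℝ≥0∞) ^ d + c * ENNReal.ofReal ((d:ℝ) * ((k:ℝ) + 1) / t) := hup
      _ ≤ (L + δ' / 2) + δ' / 2 := add_le_add hk.le herr1
      _ = L + δ' := by rw [add_assoc, ENNReal.add_halves]
      _ ≤ L + δ := add_le_add_right hδ'δ L
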